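/- Let g₁, g₂, g₃, g₄ ∈ ℝ³ be vectors such that any three of them form a basis of ℝ³ (e.g., the gradients of the barycentric coordinate functions of a nondegenerate tetrahedron). If M is a real 3×3 matrix satisfying g_iᵀ M g_j = 0 for all i ≠ j, then M = 0. -/

import Mathlib

open Matrix

/-- If `g₁, g₂, g₃, g₄ ∈ ℝ³` are such that any three of them are linearly
independent, and `M` is a 3×3 matrix with `gᵢᵀ M gⱼ = 0` for all `i ≠ j`,
then `M = 0`. -/
theorem stmt_9 (g : Fin 4 → (Fin 3 → ℝ))
    (hg : ∀ i j k : Fin 4, i ≠ j → i ≠ k → j ≠ k →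
      LinearIndependent ℝ ![g i, g j, g k])
    (M : Matrix (Fin 3) (Fin 3) ℝ)
    (hM : ∀ i j : Fin 4, i ≠ j → g i ⬝ᵥ M.mulVec (g j) = 0) :
    M = 0 := by
  have h012 := hg 0 1 2 (by decide) (by decide) (by decide)
  have hcard : Fintype.card (Fin 3) = Module.finrank ℝ (Fin 3 → ℝ) := by simp
  let b : Module.Basis (Fin 3) ℝ (Fin 3 → ℝ) :=
    basisOfLinearIndependentOfCardEqFinrank h012 hcard
  have hb : ∀ k : Fin 3, b k = ![g 0, g 1, g 2] k := by
    intro k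
    simp [b, coe_basisOfLinearIndependentOfCardEqFinrank]
  set c : Fin 3 → ℝ := fun k => b.repr (g 3) k with hc
  have hrep : g 3 = c 0 • g 0 + c 1 • g 1 + c 2 • g 2 := by
    have h := b.sum_repr (g 3)
    rw [Fin.sum_univ_three, hb 0, hb 1, hb 2] at h
    simpa [hc] using h.symm
  have hne0 : c 0 ≠ 0 := by
    intro hk0
    have h123 := hg 1 2 3 (by decide) (by decide) (by decide)
    have h := Fintype.linearIndependent_iff.mp h123 ![c 1, c 2, -1] ?_ 2
    · norm_num [Matrix.cons_val_two, Matrix.tail_cons] at h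
    · rw [Fin.sum_univ_three]
      simp only [Matrix.cons_val_zero, Matrix.cons_val_one, Matrix.head_cons,
        Matrix.cons_val_two, Matrix.tail_cons]
      rw [hrep, hk0]
      module
  have hne1 : c 1 ≠ 0 := by
    intro hk0
    have h023 := hg 0 2 3 (by decide) (by decide) (by decide)
    have h := Fintype.linearIndependent_iff.mp h023 ![c 0, c 2, -1] ?_ 2
    · norm_num [Matrix.cons_val_two, Matrix.tail_cons] at h
    · rw [Fin.sum_univ_three]
      simp only [Matrix.cons_val_zero, Matrix.cons_val_one, Matrix.head_cons,
        Matrix.cons_val_two, Matrix.tail_cons]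
      rw [hrep, hk0]
      module
  have hne2 : c 2 ≠ 0 := by
    intro hk0
    have h013 := hg 0 1 3 (by decide) (by decide) (by decide)
    have h := Fintype.linearIndependent_iff.mp h013 ![c 0, c 1, -1] ?_ 2
    · norm_num [Matrix.cons_val_two, Matrix.tail_cons] at h
    · rw [Fin.sum_univ_three]
      simp only [Matrix.cons_val_zero, Matrix.cons_val_one, Matrix.head_cons,
        Matrix.cons_val_two, Matrix.tail_cons]
      rw [hrep, hk0]
      module
  -- diagonal entries vanish
  have expand : ∀ i : Fin 4, g i ⬝ᵥ M.mulVec (g 3) =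
      c 0 * (g i ⬝ᵥ M.mulVec (g 0)) + c 1 * (g i ⬝ᵥ M.mulVec (g 1))
        + c 2 * (g i ⬝ᵥ M.mulVec (g 2)) := by
    intro i
    rw [hrep]
    simp [mulVec_add, mulVec_smul, dotProduct_add, dotProduct_smul, smul_eq_mul]
  have d0 : g 0 ⬝ᵥ M.mulVec (g 0) = 0 := by
    have h := hM 0 3 (by decide)
    rw [expand 0, hM 0 1 (by decide), hM 0 2 (by decide), mul_zero, mul_zero (c 2),
      add_zero, add_zero] at h
    exact (mul_eq_zero.mp h).resolve_left hne0
  have d1 : g 1 ⬝ᵥ M.mulVec (g 1) = 0 := by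
    have h := hM 1 3 (by decide)
    rw [expand 1, hM 1 0 (by decide), hM 1 2 (by decide), mul_zero, mul_zero (c 2),
      add_zero, zero_add] at h
    exact (mul_eq_zero.mp h).resolve_left hne1
  have d2 : g 2 ⬝ᵥ M.mulVec (g 2) = 0 := by
    have h := hM 2 3 (by decide)
    rw [expand 2, hM 2 0 (by decide), hM 2 1 (by decide), mul_zero, mul_zero (c 1),
      add_zero, zero_add] at h
    exact (mul_eq_zero.mp h).resolve_left hne2
  -- any vector whose dot with g0,g1,g2 is zero is zero
  have key : ∀ v : Fin 3 → ℝ, g 0 ⬝ᵥ v = 0 → g 1 ⬝ᵥ v = 0 → g 2 ⬝ᵥ v = 0 → v = 0 := by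
    intro v h0 h1 h2
    have hall : ∀ w : Fin 3 → ℝ, w ⬝ᵥ v = 0 := by
      intro w
      have h := b.sum_repr w
      rw [Fin.sum_univ_three, hb 0, hb 1, hb 2] at h
      simp only [Matrix.cons_val_zero, Matrix.cons_val_one, Matrix.head_cons,
        Matrix.cons_val_two, Matrix.tail_cons] at h
      rw [← h]
      simp [add_dotProduct, smul_dotProduct, h0, h1, h2]
    ext k
    have h := hall (Pi.single k 1)
    simpa [single_dotProduct] using h
  have mv : ∀ x : Fin 3 → ℝ, M.mulVec x = 0 := by
    have mv0 := key (M.mulVec (g 0)) d0 (hM 1 0 (by decide)) (hM 2 0 (by decide))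
    have mv1 := key (M.mulVec (g 1)) (hM 0 1 (by decide)) d1 (hM 2 1 (by decide))
    have mv2 := key (M.mulVec (g 2)) (hM 0 2 (by decide)) (hM 1 2 (by decide)) d2
    intro x
    have h := b.sum_repr x
    rw [Fin.sum_univ_three, hb 0, hb 1, hb 2] at h
    simp only [Matrix.cons_val_zero, Matrix.cons_val_one, Matrix.head_cons,
      Matrix.cons_val_two, Matrix.tail_cons] at h
    rw [← h]
    simp [mulVec_add, mulVec_smul, mv0, mv1, mv2]
  ext i j
  have h := congrFun (mv (Pi.single j 1)) i
  simpa [mulVec_single] using h
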